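/- Let f : R → S be a homomorphism of commutative rings and g, h : S → T two ring homomorphisms with g ∘ f = h ∘ f. Let ξ ∈ R be a nonzerodivisor whose images f(ξ) ∈ S and g(f(ξ)) ∈ T are nonzerodivisors, and suppose R, S and T are each adically complete with respect to the ideal generated by (the image of) ξ. If R/(ξ) → S/(ξ) ⇉ T/(ξ) is an equalizer diagram of rings, then both R → S ⇉ T and R[1/ξ] → S[1/ξ] ⇉ T[1/ξ] are equalizer diagrams. -/

import Mathlib

/-- A diagram of commutative rings `R → S ⇉ T`, given by `f : R →+* S` and a parallel pair
`g h : S →+* T`, is an *equalizer diagram* if `f` is injective and its image is exactly the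
set of elements of `S` on which `g` and `h` agree. -/
def IsEqualizerDiagram {R S T : Type*} [CommRing R] [CommRing S] [CommRing T]
    (f : R →+* S) (g h : S →+* T) : Prop :=
  Function.Injective f ∧ Set.range f = {s | g s = h s}

theorem aux_part1 {R S T : Type*} [CommRing R] [CommRing S] [CommRing T]
    (f : R →+* S) (g h : S →+* T) (hgf : g.comp f = h.comp f)
    (ξ : R) (hfξ : f ξ ∈ nonZeroDivisors S)
    (hgfξ : g (f ξ) ∈ nonZeroDivisors T)
    [IsAdicComplete (Ideal.span {ξ}) R]
    [IsAdicComplete (Ideal.span {f ξ}) S]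
    (Hinj : ∀ r : R, f r ∈ Ideal.span {f ξ} → r ∈ Ideal.span {ξ})
    (Hsurj : ∀ s : S, g s = h s → ∃ r : R, s - f r ∈ Ideal.span {f ξ}) :
    Function.Injective f ∧ Set.range f = {s | g s = h s} := by
  have hsmulR : ∀ n : ℕ, ((Ideal.span {ξ}) ^ n • ⊤ : Submodule R R) = Ideal.span {ξ ^ n} := by
    intro n; rw [smul_eq_mul, Ideal.mul_top, Ideal.span_singleton_pow]
  have hsmulS : ∀ n : ℕ, ((Ideal.span {f ξ}) ^ n • ⊤ : Submodule S S) = Ideal.span {f ξ ^ n} := by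
    intro n; rw [smul_eq_mul, Ideal.mul_top, Ideal.span_singleton_pow]
  have hfinj : Function.Injective f := by
    rw [injective_iff_map_eq_zero]
    intro r hr
    have key : ∀ n : ℕ, ∃ r' : R, r = ξ ^ n * r' ∧ f r' = 0 := by
      intro n
      induction n with
      | zero => exact ⟨r, by simp, hr⟩
      | succ n ih =>
        obtain ⟨r', hr', hfr'⟩ := ih
        have h1 : r' ∈ Ideal.span {ξ} := Hinj r' (by rw [hfr']; exact Ideal.zero_mem _)
        obtain ⟨c, hc⟩ := Ideal.mem_span_singleton.mp h1
        refine ⟨c, by rw [hr', hc]; ring, ?_⟩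
        apply (mem_nonZeroDivisors_iff.mp hfξ).2
        rw [mul_comm]
        rw [hc, map_mul] at hfr'
        exact hfr'
    refine IsHausdorff.haus (IsAdicComplete.toIsHausdorff (I := Ideal.span {ξ}) (M := R)) r
      fun n => ?_
    rw [SModEq.zero, hsmulR n, Ideal.mem_span_singleton]
    obtain ⟨r', hr', -⟩ := key n
    exact ⟨r', hr'⟩
  refine ⟨hfinj, ?_⟩
  ext s
  simp only [Set.mem_range, Set.mem_setOf_eq]
  constructor
  · rintro ⟨r, rfl⟩
    exact RingHom.congr_fun hgf r
  · intro hs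
    -- step lemma
    have step : ∀ t : S, g t = h t → ∃ (r : R) (t' : S), t = f r + f ξ * t' ∧ g t' = h t' := by
      intro t ht
      obtain ⟨r, hr⟩ := Hsurj t ht
      obtain ⟨c, hc⟩ := Ideal.mem_span_singleton.mp hr
      refine ⟨r, c, by rw [← hc]; ring, ?_⟩
      rw [← sub_eq_zero]
      apply (mem_nonZeroDivisors_iff.mp hgfξ).2
      have e1 : g (f r) = h (f r) := RingHom.congr_fun hgf r
      have e2 : g (f ξ) = h (f ξ) := RingHom.congr_fun hgf ξ
      have := congrArg g hc
      have := congrArg h hc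
      have hg : g t - g (f r) = g (f ξ) * g c := by
        rw [← map_mul, ← hc, map_sub]
      have hh : h t - h (f r) = g (f ξ) * h c := by
        rw [e2, ← map_mul, ← hc, map_sub]
      have : g (f ξ) * g c = g (f ξ) * h c := by rw [← hg, ← hh, ht, e1]
      linear_combination this
    choose rr tt heq hgtt using step
    -- build the sequence
    let F : {t : S // g t = h t} → {t : S // g t = h t} × R :=
      fun t => (⟨tt t.1 t.2, hgtt t.1 t.2⟩, rr t.1 t.2)
    let seq : ℕ → {t : S // g t = h t} × R := fun n => (fun p => F p.1)^[n] (⟨s, hs⟩, 0)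
    have hseq : ∀ n : ℕ, ((seq n).1 : S) = f (seq (n+1)).2 + f ξ * ((seq (n+1)).1 : S) := by
      intro n
      have e : seq (n+1) = F (seq n).1 := Function.iterate_succ_apply' _ _ _
      rw [e]
      exact heq (seq n).1 (seq n).1.2
    set A : ℕ → R := fun n => ∑ i ∈ Finset.range n, ξ ^ i * (seq (i+1)).2 with hA
    have key : ∀ n : ℕ, s = f (A n) + f ξ ^ n * ((seq n).1 : S) := by
      intro n
      induction n with
      | zero => simp [hA, seq]
      | succ n ih =>
        rw [ih, hseq n]
        have : A (n+1) = A n + ξ ^ n * (seq (n+1)).2 := Finset.sum_range_succ _ _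
        rw [this, map_add, map_mul, map_pow, pow_succ]
        ring
    have cauchy : ∀ {m n : ℕ}, m ≤ n →
        A m ≡ A n [SMOD ((Ideal.span {ξ}) ^ m • ⊤ : Submodule R R)] := by
      intro m n hmn
      rw [SModEq.sub_mem, hsmulR m]
      have : A m - A n = -(A n - A m) := by ring
      rw [this]
      refine neg_mem ?_
      have : A n - A m = ∑ i ∈ Finset.Ico m n, ξ ^ i * (seq (i+1)).2 := by
        rw [hA, Finset.sum_Ico_eq_sub _ hmn]
      rw [this]
      refine Ideal.sum_mem _ fun i hi => ?_
      rw [Finset.mem_Ico] at hi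
      exact Ideal.mem_span_singleton.mpr
        (dvd_mul_of_dvd_left (pow_dvd_pow ξ hi.1) _)
    obtain ⟨L, hL⟩ := IsPrecomplete.prec (IsAdicComplete.toIsPrecomplete
      (I := Ideal.span {ξ}) (M := R)) cauchy
    refine ⟨L, ?_⟩
    have : s - f L = 0 := by
      refine IsHausdorff.haus (IsAdicComplete.toIsHausdorff (I := Ideal.span {f ξ}) (M := S))
        (s - f L) fun n => ?_
      rw [SModEq.zero, hsmulS n, Ideal.mem_span_singleton]
      have h1 : A n - L ∈ Ideal.span {ξ ^ n} := by
        have := hL n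
        rw [SModEq.sub_mem, hsmulR n] at this
        exact this
      obtain ⟨c, hc⟩ := Ideal.mem_span_singleton.mp h1
      have : s - f L = f ξ ^ n * (f c + (seq n).1) := by
        have h2 : f (A n) - f L = f ξ ^ n * f c := by
          rw [← map_pow, ← map_mul, ← map_sub, hc]
        rw [key n]
        linear_combination h2
      exact ⟨_, this⟩
    exact (sub_eq_zero.mp this).symm

/-- Suppose `R → S ⇉ T` commutes, `ξ ∈ R` is a nonzerodivisor whose images in `S` and `T`
are nonzerodivisors, and `R`, `S`, `T` are adically complete with respect to the ideal
generated by (the image of) `ξ`. If `R/(ξ) → S/(ξ) ⇉ T/(ξ)` is an equalizer diagram, then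
both `R → S ⇉ T` and `R[1/ξ] → S[1/ξ] ⇉ T[1/ξ]` are equalizer diagrams. -/
theorem statement3 {R S T : Type*} [CommRing R] [CommRing S] [CommRing T]
    (f : R →+* S) (g h : S →+* T) (hgf : g.comp f = h.comp f)
    (ξ : R) (hξ : ξ ∈ nonZeroDivisors R) (hfξ : f ξ ∈ nonZeroDivisors S)
    (hgfξ : g (f ξ) ∈ nonZeroDivisors T)
    [IsAdicComplete (Ideal.span {ξ}) R]
    [IsAdicComplete (Ideal.span {f ξ}) S]
    [IsAdicComplete (Ideal.span {g (f ξ)}) T]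
    (H1 : IsEqualizerDiagram
      (Ideal.quotientMap (Ideal.span {f ξ}) f (by
        rw [Ideal.span_le, Set.singleton_subset_iff, SetLike.mem_coe, Ideal.mem_comap]
        exact Ideal.subset_span rfl))
      (Ideal.quotientMap (Ideal.span {g (f ξ)}) g (by
        rw [Ideal.span_le, Set.singleton_subset_iff, SetLike.mem_coe, Ideal.mem_comap]
        exact Ideal.subset_span rfl))
      (Ideal.quotientMap (Ideal.span {g (f ξ)}) h (by
        have e : g (f ξ) = h (f ξ) := RingHom.congr_fun hgf ξ
        rw [Ideal.span_le, Set.singleton_subset_iff, SetLike.mem_coe, Ideal.mem_comap, ← e]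
        exact Ideal.subset_span rfl))) :
    IsEqualizerDiagram f g h ∧
    IsEqualizerDiagram
      (Localization.awayMap f ξ)
      (Localization.awayMap g (f ξ))
      (IsLocalization.map (Localization.Away (g (f ξ))) h
        (show Submonoid.powers (f ξ) ≤ (Submonoid.powers (g (f ξ))).comap h by
          rintro x ⟨n, rfl⟩
          refine ⟨n, ?_⟩
          have e : g (f ξ) = h (f ξ) := RingHom.congr_fun hgf ξ
          simp [map_pow, e]) :
        Localization.Away (f ξ) →+* Localization.Away (g (f ξ))) := by
  obtain ⟨H1inj, H1rng⟩ := H1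
  have Hinj : ∀ r : R, f r ∈ Ideal.span {f ξ} → r ∈ Ideal.span {ξ} := by
    intro r hr
    have : Ideal.quotientMap (Ideal.span {f ξ}) f (by
        rw [Ideal.span_le, Set.singleton_subset_iff, SetLike.mem_coe, Ideal.mem_comap]
        exact Ideal.subset_span rfl) (Ideal.Quotient.mk _ r) = 0 := by
      rw [Ideal.quotientMap_mk, Ideal.Quotient.eq_zero_iff_mem]
      exact hr
    have h0 : (Ideal.Quotient.mk (Ideal.span {ξ}) r) = 0 := by
      apply H1inj
      rw [this, map_zero]
    rwa [Ideal.Quotient.eq_zero_iff_mem] at h0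
  have Hsurj : ∀ s : S, g s = h s → ∃ r : R, s - f r ∈ Ideal.span {f ξ} := by
    intro s hsgh
    have hmem : (Ideal.Quotient.mk (Ideal.span {f ξ}) s) ∈
        Set.range (Ideal.quotientMap (Ideal.span {f ξ}) f (by
          rw [Ideal.span_le, Set.singleton_subset_iff, SetLike.mem_coe, Ideal.mem_comap]
          exact Ideal.subset_span rfl)) := by
      rw [H1rng]
      show _ = _
      rw [Ideal.quotientMap_mk, Ideal.quotientMap_mk, hsgh]
    obtain ⟨x, hx⟩ := hmem
    obtain ⟨r, rfl⟩ := Ideal.Quotient.mk_surjective x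
    rw [Ideal.quotientMap_mk] at hx
    refine ⟨r, ?_⟩
    have := Ideal.Quotient.eq.mp hx
    simpa using neg_mem this
  have E1 : Function.Injective f ∧ Set.range f = {s | g s = h s} :=
    aux_part1 f g h hgf ξ hfξ hgfξ Hinj Hsurj
  have hleS : Submonoid.powers (f ξ) ≤ nonZeroDivisors S := by
    rintro x ⟨n, rfl⟩; exact pow_mem hfξ n
  have hleT : Submonoid.powers (g (f ξ)) ≤ nonZeroDivisors T := by
    rintro x ⟨n, rfl⟩; exact pow_mem hgfξ n
  refine ⟨E1, ?_, ?_⟩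
  · -- injectivity of the localized map
    rw [injective_iff_map_eq_zero]
    intro x hx
    obtain ⟨⟨r, d⟩, rfl⟩ := IsLocalization.mk'_surjective (Submonoid.powers ξ) x
    unfold Localization.awayMap IsLocalization.Away.map at hx
    rw [IsLocalization.map_mk', IsLocalization.mk'_eq_zero_iff] at hx
    obtain ⟨m, hm⟩ := hx
    have hfr : f r = 0 := (mem_nonZeroDivisors_iff.mp (hleS m.2)).2 (f r) (by rwa [mul_comm])
    have : r = 0 := E1.1 (by rw [hfr, map_zero])
    rw [this]; exact IsLocalization.mk'_zero _
  · -- range of the localized map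
    ext x
    simp only [Set.mem_range, Set.mem_setOf_eq]
    constructor
    · rintro ⟨y, rfl⟩
      have hcomp : (Localization.awayMap g (f ξ)).comp (Localization.awayMap f ξ) =
          (IsLocalization.map (Localization.Away (g (f ξ))) h
            (show Submonoid.powers (f ξ) ≤ (Submonoid.powers (g (f ξ))).comap h by
              rintro x ⟨n, rfl⟩
              refine ⟨n, ?_⟩
              have e : g (f ξ) = h (f ξ) := RingHom.congr_fun hgf ξ
              simp [map_pow, e]) :
            Localization.Away (f ξ) →+* Localization.Away (g (f ξ))).comp
              (Localization.awayMap f ξ) := by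
        apply IsLocalization.ringHom_ext (Submonoid.powers ξ)
        ext r
        simp only [RingHom.comp_apply]
        unfold Localization.awayMap IsLocalization.Away.map
        rw [IsLocalization.map_eq, IsLocalization.map_eq, IsLocalization.map_eq]
        exact congrArg _ (RingHom.congr_fun hgf r)
      exact RingHom.congr_fun hcomp y
    · intro hx
      obtain ⟨⟨s, d⟩, rfl⟩ := IsLocalization.mk'_surjective (Submonoid.powers (f ξ)) x
      obtain ⟨n, hn⟩ := d.2
      unfold Localization.awayMap IsLocalization.Away.map at hx
      rw [IsLocalization.map_mk', IsLocalization.map_mk',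
        IsLocalization.mk'_eq_iff_eq] at hx
      have hx' := IsLocalization.injective (Localization.Away (g (f ξ))) hleT hx
      have hd : h (d : S) = g (d : S) := by
        rw [← hn, map_pow, map_pow, ← RingHom.comp_apply, ← RingHom.comp_apply, hgf]
      have hn' : f ξ ^ n = (d : S) := hn
      have hgs : g s = h s := by
        have hx'' : h (d : S) * g s = g (d : S) * h s := hx'
        rw [hd] at hx''
        have hnz : g (d : S) ∈ nonZeroDivisors T := by
          rw [← hn', map_pow]; exact pow_mem hgfξ n
        rw [← sub_eq_zero]
        exact (mem_nonZeroDivisors_iff.mp hnz).2 _ (by linear_combination hx'')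
      have hs' : s ∈ Set.range f := by rw [E1.2]; exact hgs
      obtain ⟨r, rfl⟩ := hs'
      refine ⟨IsLocalization.mk' (Localization.Away ξ) r
        (⟨ξ ^ n, n, rfl⟩ : Submonoid.powers ξ), ?_⟩
      unfold Localization.awayMap IsLocalization.Away.map
      rw [IsLocalization.map_mk']
      exact congrArg _ (Subtype.ext (by simp [map_pow, hn']))
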